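/- Let φ : ℝ → ℝ be continuous, bounded and in L¹(ℝ), and define a(k) = exp( −(1/(2πi)) ∫_ℝ φ(s)/(s − k) ds ) for Im k > 0. Then for every x ∈ ℝ, lim_{ε→0⁺} |a(x + iε)|² = e^{−φ(x)}. In particular, if Q : ℝ → ℂ is continuous with sup|Q| < 1 and φ(s) = log(1 − |Q(s)|²) is in L¹(ℝ), then the boundary values of a satisfy |a(x)|² = 1/(1 − |Q(x)|²) for x ∈ ℝ, and hence (setting b = Q·a on ℝ) the boundary values satisfy |a(x)|² − |b(x)|² = 1. -/

import Mathlib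

open MeasureTheory Complex Filter Set

noncomputable section

lemma poisson_tendsto (φ : ℝ → ℝ) (hc : Continuous φ) (M : ℝ) (hM : ∀ s, |φ s| ≤ M)
    (x : ℝ) :
    Tendsto (fun ε : ℝ => ∫ s : ℝ, φ s * (ε / ((s - x) ^ 2 + ε ^ 2)))
      (nhdsWithin 0 (Set.Ioi 0)) (nhds (Real.pi * φ x)) := by
  have key : ∀ ε : ℝ, 0 < ε →
      (∫ s : ℝ, φ s * (ε / ((s - x) ^ 2 + ε ^ 2)))
        = ∫ t : ℝ, φ (x + ε * t) * (1 + t ^ 2)⁻¹ := by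
    intro ε hε
    have hεne : ε ≠ 0 := hε.ne'
    have h2 := MeasureTheory.Measure.integral_comp_mul_left
      (fun u : ℝ => φ (x + u) * (ε / (u ^ 2 + ε ^ 2))) ε
    have h3 := MeasureTheory.integral_add_left_eq_self (μ := volume)
      (fun u : ℝ => φ u * (ε / ((u - x) ^ 2 + ε ^ 2))) x
    simp only [add_sub_cancel_left] at h3
    have h4 : (fun t : ℝ => φ (x + ε * t) * (ε / ((ε * t) ^ 2 + ε ^ 2)))
        = fun t : ℝ => ε⁻¹ * (φ (x + ε * t) * (1 + t ^ 2)⁻¹) := by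
      funext t
      have : (ε * t) ^ 2 + ε ^ 2 = ε ^ 2 * (1 + t ^ 2) := by ring
      rw [this]
      field_simp
    rw [h4] at h2
    rw [integral_const_mul, abs_of_pos (inv_pos.mpr hε), smul_eq_mul, h3] at h2
    have := mul_left_cancel₀ (inv_ne_zero hεne) h2
    linarith [this]
  have hlim : Tendsto (fun ε : ℝ => ∫ t : ℝ, φ (x + ε * t) * (1 + t ^ 2)⁻¹)
      (nhdsWithin 0 (Set.Ioi 0)) (nhds (Real.pi * φ x)) := by
    have hint : ∫ t : ℝ, φ x * (1 + t ^ 2)⁻¹ = Real.pi * φ x := by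
      rw [integral_const_mul, integral_univ_inv_one_add_sq]; ring
    rw [← hint]
    apply MeasureTheory.tendsto_integral_filter_of_dominated_convergence
      (fun t => M * (1 + t ^ 2)⁻¹)
    · exact Filter.Eventually.of_forall fun ε =>
        ((hc.comp (continuous_const.add (continuous_const.mul continuous_id))).mul
          ((continuous_const.add (continuous_pow 2)).inv₀ (fun t => (by positivity : (0:ℝ) < 1 + t ^ 2).ne'))).aestronglyMeasurable
    · refine Filter.Eventually.of_forall fun ε => ae_of_all _ fun t => ?_
      rw [norm_mul, Real.norm_eq_abs, Real.norm_eq_abs]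
      have hb : |(1 + t ^ 2)⁻¹| = (1 + t ^ 2)⁻¹ := _root_.abs_of_nonneg (by positivity)
      rw [hb]
      exact mul_le_mul_of_nonneg_right (hM _) (by positivity)
    · exact integrable_inv_one_add_sq.const_mul M
    · refine ae_of_all _ fun t => ?_
      have h1 : Tendsto (fun ε : ℝ => φ (x + ε * t)) (nhds 0) (nhds (φ x)) := by
        have : Continuous fun ε : ℝ => φ (x + ε * t) :=
          hc.comp (continuous_const.add (continuous_id.mul continuous_const))
        simpa using this.tendsto 0
      exact ((h1.mono_left nhdsWithin_le_nhds).mul tendsto_const_nhds)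
  refine hlim.congr' ?_
  filter_upwards [self_mem_nhdsWithin] with ε hε
  exact (key ε hε).symm

lemma norm_a_sq (φ : ℝ → ℝ) (hφint : Integrable φ (volume : Measure ℝ))
    (x ε : ℝ) (hε : 0 < ε) :
    ‖Complex.exp (-(1 / (2 * Real.pi * Complex.I)) *
        ∫ s : ℝ, (φ s : ℂ) / ((s : ℂ) - ((x : ℂ) + ε * Complex.I)))‖ ^ 2
      = Real.exp (-(1 / Real.pi) * ∫ s : ℝ, φ s * (ε / ((s - x) ^ 2 + ε ^ 2))) := by
  set k : ℂ := (x : ℂ) + ε * Complex.I with hk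
  have hre : ∀ s : ℝ, ((s : ℂ) - k).re = s - x := by
    intro s; simp [hk]
  have him : ∀ s : ℝ, ((s : ℂ) - k).im = -ε := by
    intro s; simp [hk]
  have hne : ∀ s : ℝ, (s : ℂ) - k ≠ 0 := by
    intro s h
    have := him s
    rw [h] at this
    simp at this
    exact hε.ne' this
  -- integrability
  have hint : Integrable (fun s : ℝ => (φ s : ℂ) / ((s : ℂ) - k)) volume := by
    have : (fun s : ℝ => (φ s : ℂ) / ((s : ℂ) - k))
        = fun s : ℝ => ((s : ℂ) - k)⁻¹ * (φ s : ℂ) := by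
      funext s; rw [div_eq_mul_inv, mul_comm]
    rw [this]
    refine hφint.ofReal.bdd_mul (c := ε⁻¹) ?_ ?_
    · exact ((Complex.continuous_ofReal.sub continuous_const).inv₀ hne).aestronglyMeasurable
    · refine ae_of_all _ fun s => ?_
      rw [norm_inv]
      refine inv_anti₀ hε ?_
      calc ε = |((s : ℂ) - k).im| := by rw [him s, abs_neg, abs_of_pos hε]
        _ ≤ ‖(s : ℂ) - k‖ := Complex.abs_im_le_norm _
        _ = ‖(s : ℂ) - k‖ := rfl
  -- imaginary part of the integral
  have himint : (∫ s : ℝ, (φ s : ℂ) / ((s : ℂ) - k)).im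
      = ∫ s : ℝ, φ s * (ε / ((s - x) ^ 2 + ε ^ 2)) := by
    rw [show (∫ s : ℝ, (φ s : ℂ) / ((s : ℂ) - k)).im
        = RCLike.im (∫ s : ℝ, (φ s : ℂ) / ((s : ℂ) - k)) from RCLike.im_to_complex.symm,
      ← integral_im hint]
    simp only [RCLike.im_to_complex]
    congr 1
    funext s
    have hns : Complex.normSq ((s : ℂ) - k) = (s - x) ^ 2 + ε ^ 2 := by
      rw [Complex.normSq_apply, hre s, him s]; ring
    rw [Complex.div_im, hns, hre s, him s]
    simp only [Complex.ofReal_re, Complex.ofReal_im]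
    have hpos : (0:ℝ) < (s - x) ^ 2 + ε ^ 2 := by positivity
    field_simp
    ring
  -- real part of the exponent
  have hcoef : -(1 / (2 * (Real.pi : ℂ) * Complex.I))
      = ((2 * Real.pi)⁻¹ : ℝ) * Complex.I := by
    rw [one_div, mul_inv, Complex.inv_I]
    push_cast
    ring
  have hzre : (-(1 / (2 * (Real.pi : ℂ) * Complex.I)) *
      ∫ s : ℝ, (φ s : ℂ) / ((s : ℂ) - k)).re
      = -(2 * Real.pi)⁻¹ * (∫ s : ℝ, (φ s : ℂ) / ((s : ℂ) - k)).im := by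
    rw [hcoef]
    simp [Complex.mul_re, Complex.mul_im]
  rw [Complex.norm_exp, hzre, himint, sq, ← Real.exp_add]
  congr 1
  have hπ : Real.pi ≠ 0 := Real.pi_ne_zero
  generalize (∫ s : ℝ, φ s * (ε / ((s - x) ^ 2 + ε ^ 2))) = J
  field_simp
  ring

theorem a_boundary_values
    (φ : ℝ → ℝ) (hφcont : Continuous φ) (hφbdd : ∃ M : ℝ, ∀ s : ℝ, |φ s| ≤ M)
    (hφint : Integrable φ (volume : Measure ℝ))
    (a : ℂ → ℂ)
    (ha : a = fun k =>
      Complex.exp (-(1 / (2 * Real.pi * Complex.I)) * ∫ s : ℝ, (φ s : ℂ) / ((s : ℂ) - k))) :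
    (∀ x : ℝ,
      Tendsto (fun ε : ℝ => ‖a ((x : ℂ) + ε * Complex.I)‖ ^ 2)
        (nhdsWithin 0 (Set.Ioi 0)) (nhds (Real.exp (-φ x)))) ∧
    (∀ Q : ℝ → ℂ, Continuous Q → (∃ M : ℝ, M < 1 ∧ ∀ s : ℝ, ‖Q s‖ ≤ M) →
      (φ = fun s => Real.log (1 - ‖Q s‖ ^ 2)) →
      ∀ x : ℝ,
        Tendsto (fun ε : ℝ => ‖a ((x : ℂ) + ε * Complex.I)‖ ^ 2)
          (nhdsWithin 0 (Set.Ioi 0)) (nhds (1 / (1 - ‖Q x‖ ^ 2))) ∧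
        Tendsto (fun ε : ℝ =>
            ‖a ((x : ℂ) + ε * Complex.I)‖ ^ 2 - ‖Q x * a ((x : ℂ) + ε * Complex.I)‖ ^ 2)
          (nhdsWithin 0 (Set.Ioi 0)) (nhds 1)) := by
  obtain ⟨M, hM⟩ := hφbdd
  have main : ∀ x : ℝ,
      Tendsto (fun ε : ℝ => ‖a ((x : ℂ) + ε * Complex.I)‖ ^ 2)
        (nhdsWithin 0 (Set.Ioi 0)) (nhds (Real.exp (-φ x))) := by
    intro x
    have hP := poisson_tendsto φ hφcont M hM x
    have hP2 : Tendsto (fun ε : ℝ =>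
        Real.exp (-(1 / Real.pi) * ∫ s : ℝ, φ s * (ε / ((s - x) ^ 2 + ε ^ 2))))
        (nhdsWithin 0 (Set.Ioi 0)) (nhds (Real.exp (-φ x))) := by
      have h1 := hP.const_mul (-(1 / Real.pi))
      have h2 : -(1 / Real.pi) * (Real.pi * φ x) = -φ x := by
        field_simp
      rw [h2] at h1
      exact (Real.continuous_exp.tendsto _).comp h1
    refine hP2.congr' ?_
    filter_upwards [self_mem_nhdsWithin] with ε hε
    rw [ha]
    exact (norm_a_sq φ hφint x ε hε).symm
  refine ⟨main, ?_⟩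
  rintro Q hQc ⟨MQ, hMQ1, hMQ⟩ hφQ x
  have hQx : ‖Q x‖ ^ 2 < 1 := by
    have h0 : ‖Q x‖ < 1 := lt_of_le_of_lt (hMQ x) hMQ1
    calc ‖Q x‖ ^ 2 ≤ ‖Q x‖ := by
          nlinarith [norm_nonneg (Q x)]
      _ < 1 := h0
  have hpos : 0 < 1 - ‖Q x‖ ^ 2 := by linarith
  have hval : Real.exp (-φ x) = 1 / (1 - ‖Q x‖ ^ 2) := by
    rw [hφQ]
    simp only
    rw [Real.exp_neg, Real.exp_log hpos, one_div]
  have h1 : Tendsto (fun ε : ℝ => ‖a ((x : ℂ) + ε * Complex.I)‖ ^ 2)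
      (nhdsWithin 0 (Set.Ioi 0)) (nhds (1 / (1 - ‖Q x‖ ^ 2))) := by
    rw [← hval]; exact main x
  refine ⟨h1, ?_⟩
  have h2 := h1.const_mul (1 - ‖Q x‖ ^ 2)
  have h3 : (1 - ‖Q x‖ ^ 2) * (1 / (1 - ‖Q x‖ ^ 2)) = 1 :=
    mul_one_div_cancel hpos.ne'
  rw [h3] at h2
  refine h2.congr ?_
  intro ε
  rw [norm_mul, mul_pow]
  ring

end
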